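/- With the opposite sorting P_X(1)D_KL(P_{Y|X=1}‖P_Y) ≤ … ≤ P_X(m)D_KL(P_{Y|X=m}‖P_Y) and Z = min(X, M), one has I(Y;Z) ≤ ((M−1)/|𝒳|) I(X;Y) + Pr(X ≥ M) log(1/Pr(X ≥ M)). -/
import Mathlib


open Real BigOperators

namespace BN

variable {α β γ : Type*}

section Finite
variable [Fintype α] [Fintype β] [Fintype γ]

/-- `q` is a probability mass function on a finite alphabet. -/
def IsPMF (q : α → ℝ) : Prop := (∀ a, 0 ≤ q a) ∧ (∑ a, q a) = 1

/-- `p` is a joint probability mass function. -/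
def IsJointPMF (p : α → β → ℝ) : Prop :=
  (∀ a b, 0 ≤ p a b) ∧ (∑ a, ∑ b, p a b) = 1

/-- `k` is a channel (conditional distribution) from `α` to `γ`. -/
def IsChannel (k : α → γ → ℝ) : Prop :=
  (∀ a c, 0 ≤ k a c) ∧ ∀ a, (∑ c, k a c) = 1

/-- first marginal of a joint pmf -/
def fstM (p : α → β → ℝ) (a : α) : ℝ := ∑ b, p a b

/-- second marginal of a joint pmf -/
def sndM (p : α → β → ℝ) (b : β) : ℝ := ∑ a, p a b

/-- Shannon mutual information (in nats) of a joint pmf. -/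
noncomputable def mi (p : α → β → ℝ) : ℝ :=
  ∑ a, ∑ b, p a b * Real.log (p a b / (fstM p a * sndM p b))

/-- Shannon entropy (in nats). -/
noncomputable def ent (q : α → ℝ) : ℝ := -∑ a, q a * Real.log (q a)

/-- conditional entropy H(X|Y) of the first coordinate given the second. -/
noncomputable def condEnt (p : α → β → ℝ) : ℝ :=
  -∑ a, ∑ b, p a b * Real.log (p a b / sndM p b)

/-- Joint pmf of (X,T) when T is generated from X via channel `k`,
so Y ⊸ X ⊸ T is a Markov chain. -/
noncomputable def jXT (p : α → β → ℝ) (k : α → γ → ℝ) : α → γ → ℝ :=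
  fun a c => fstM p a * k a c

/-- Joint pmf of (Y,T) under the Markov chain Y ⊸ X ⊸ T. -/
noncomputable def jYT (p : α → β → ℝ) (k : α → γ → ℝ) : β → γ → ℝ :=
  fun b c => ∑ a, p a b * k a c

/-- I(X;T) under the Markov chain Y ⊸ X ⊸ T. -/
noncomputable def miXT (p : α → β → ℝ) (k : α → γ → ℝ) : ℝ := mi (jXT p k)

/-- I(Y;T) under the Markov chain Y ⊸ X ⊸ T. -/
noncomputable def miYT (p : α → β → ℝ) (k : α → γ → ℝ) : ℝ := mi (jYT p k)

/-- The information bottleneck function. -/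
noncomputable def IB (p : α → β → ℝ) (R : ℝ) : ℝ :=
  sSup {v | ∃ (n : ℕ) (k : α → Fin n → ℝ),
    IsChannel k ∧ miXT p k ≤ R ∧ v = miYT p k}

/-- The privacy funnel function. -/
noncomputable def PF (p : α → β → ℝ) (r : ℝ) : ℝ :=
  sInf {v | ∃ (n : ℕ) (k : α → Fin n → ℝ),
    IsChannel k ∧ r ≤ miXT p k ∧ v = miYT p k}

end Finite

end BN

namespace BN


lemma sorted_partial_avg {m k : ℕ} (hk : k < m) (c : Fin m → ℝ)
    (hs : ∀ i j : Fin m, i ≤ j → c i ≤ c j) :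
    (m : ℝ) * (∑ z : Fin m, if z.1 < k then c z else 0) ≤ (k : ℝ) * ∑ z, c z := by
  classical
  set cp : ℝ := c ⟨k, hk⟩ with hcp
  set F : ℝ := ∑ z : Fin m, if z.1 < k then c z else 0 with hF
  set G : ℝ := ∑ z : Fin m, if k ≤ z.1 then c z else 0 with hG
  have hT : ∑ z, c z = F + G := by
    rw [hF, hG, ← Finset.sum_add_distrib]
    apply Finset.sum_congr rfl
    intro z _
    by_cases h : z.1 < k
    · simp [h, Nat.not_le.mpr h]
    · simp [h, Nat.not_lt.mp h]
  have hcard1 : (Finset.univ.filter fun z : Fin m => z.1 < k).card = k := by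
    have : (Finset.univ.filter fun z : Fin m => z.1 < k) = Finset.Iio ⟨k, hk⟩ := by
      ext z; simp [Finset.mem_Iio, Fin.lt_def]
    rw [this, Fin.card_Iio]
  have hcard2 : (Finset.univ.filter fun z : Fin m => k ≤ z.1).card = m - k := by
    have : (Finset.univ.filter fun z : Fin m => k ≤ z.1) = Finset.Ici ⟨k, hk⟩ := by
      ext z; simp [Finset.mem_Ici, Fin.le_def]
    rw [this, Fin.card_Ici]
  have hFle : F ≤ (k : ℝ) * cp := by
    have h1 : F ≤ ∑ z : Fin m, if z.1 < k then cp else 0 := by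
      apply Finset.sum_le_sum
      intro z _
      by_cases h : z.1 < k
      · simp only [h, if_true]
        exact hs z ⟨k, hk⟩ (by simpa [Fin.le_def] using le_of_lt h)
      · simp [h]
    have h2 : (∑ z : Fin m, if z.1 < k then cp else 0) = (k : ℝ) * cp := by
      rw [Finset.sum_ite, Finset.sum_const, Finset.sum_const_zero, add_zero, hcard1,
        nsmul_eq_mul]
    linarith
  have hGge : ((m : ℝ) - k) * cp ≤ G := by
    have h1 : (∑ z : Fin m, if k ≤ z.1 then cp else 0) ≤ G := by
      apply Finset.sum_le_sum
      intro z _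
      by_cases h : k ≤ z.1
      · simp only [h, if_true]
        exact hs ⟨k, hk⟩ z (by simpa [Fin.le_def] using h)
      · simp [h]
    have h2 : (∑ z : Fin m, if k ≤ z.1 then cp else 0) = ((m : ℝ) - k) * cp := by
      rw [Finset.sum_ite, Finset.sum_const, Finset.sum_const_zero, add_zero, hcard2,
        nsmul_eq_mul]
      congr 1
      push_cast [le_of_lt hk]
      ring
    linarith
  have hk0 : (0:ℝ) ≤ (k:ℝ) := by positivity
  have hmk0 : (0:ℝ) ≤ (m:ℝ) - k := by
    have h : (k:ℝ) ≤ (m:ℝ) := by exact_mod_cast hk.le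
    linarith
  rw [hT]
  nlinarith [mul_le_mul_of_nonneg_left hFle hmk0, mul_le_mul_of_nonneg_left hGge hk0]

noncomputable def contrib {m : ℕ} {β : Type*} [Fintype β]
    (p : Fin m → β → ℝ) (x : Fin m) : ℝ :=
  ∑ y, p x y * Real.log (p x y / (fstM p x * sndM p y))

def quant (m M : ℕ) (hm : 0 < m) : Fin m → Fin m :=
  fun x => ⟨min x.1 (M - 1), lt_of_le_of_lt (min_le_left _ _) x.2⟩

noncomputable def jZY {m : ℕ} {β : Type*} [Fintype β]
    (p : Fin m → β → ℝ) (f : Fin m → Fin m) : Fin m → β → ℝ :=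
  fun z y => ∑ x, if f x = z then p x y else 0

/-- with the opposite sorting
`P_X(1)D(P_{Y|X=1}‖P_Y) ≤ ⋯ ≤ P_X(m)D(P_{Y|X=m}‖P_Y)` and `Z = min(X, M)`,
`I(Y;Z) ≤ ((M−1)/|𝒳|)·I(X;Y) + Pr(X ≥ M)·log(1/Pr(X ≥ M))`. -/
theorem quantization_upper_bound {β : Type*} [Fintype β]
    (m M : ℕ) (hm : 0 < m) (hM : 1 ≤ M) (hMm : M ≤ m)
    (p : Fin m → β → ℝ) (hp : IsJointPMF p)
    (hsort : ∀ i j : Fin m, i ≤ j → contrib p i ≤ contrib p j)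
    (hpos : 0 < ∑ x : Fin m, if M - 1 ≤ x.1 then fstM p x else 0) :
    mi (jZY p (quant m M hm)) ≤
      ((M : ℝ) - 1) / m * mi p +
        (∑ x : Fin m, if M - 1 ≤ x.1 then fstM p x else 0) *
          Real.log (1 / (∑ x : Fin m, if M - 1 ≤ x.1 then fstM p x else 0)) := by
  classical
  have hpnn := hp.1
  have hkm : M - 1 < m := by omega
  set k := M - 1 with hkdef
  set w : ℝ := ∑ x : Fin m, if k ≤ x.1 then fstM p x else 0 with hwdef
  set q : Fin m → β → ℝ := jZY p (quant m M hm) with hqdef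
  have hw : 0 < w := hpos
  have hqval : ∀ x : Fin m, (quant m M hm x).1 = min x.1 k := fun x => rfl
  -- q below the cut
  have hq_lt : ∀ z : Fin m, z.1 < k → ∀ y, q z y = p z y := by
    intro z hz y
    rw [hqdef]
    show (∑ x : Fin m, if quant m M hm x = z then p x y else 0) = p z y
    rw [Finset.sum_eq_single z]
    · rw [if_pos]
      apply Fin.ext
      rw [hqval]
      omega
    · intro x _ hx
      rw [if_neg]
      intro h
      have h' : min x.1 k = z.1 := by rw [← hqval x, h]
      exact hx (Fin.ext (by omega))
    · intro h; exact absurd (Finset.mem_univ z) h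
  -- q at the cut
  have hq_k : ∀ z : Fin m, z.1 = k → ∀ y,
      q z y = ∑ x : Fin m, if k ≤ x.1 then p x y else 0 := by
    intro z hz y
    rw [hqdef]
    show (∑ x : Fin m, if quant m M hm x = z then p x y else 0) = _
    apply Finset.sum_congr rfl
    intro x _
    have : (quant m M hm x = z) ↔ (k ≤ x.1) := by
      rw [Fin.ext_iff, hqval]
      omega
    simp [this]
  -- q above the cut
  have hq_gt : ∀ z : Fin m, k < z.1 → ∀ y, q z y = 0 := by
    intro z hz y
    rw [hqdef]
    show (∑ x : Fin m, if quant m M hm x = z then p x y else 0) = 0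
    apply Finset.sum_eq_zero
    intro x _
    rw [if_neg]
    intro h
    have h' : min x.1 k = z.1 := by rw [← hqval x, h]
    omega
  -- second marginal preserved
  have hS : ∀ y, sndM q y = sndM p y := by
    intro y
    unfold sndM
    calc (∑ z, q z y)
        = ∑ z : Fin m, ∑ x : Fin m, if quant m M hm x = z then p x y else 0 := rfl
      _ = ∑ x : Fin m, ∑ z : Fin m, if quant m M hm x = z then p x y else 0 :=
          Finset.sum_comm
      _ = ∑ x, p x y := by
          apply Finset.sum_congr rfl
          intro x _
          rw [Finset.sum_ite_eq Finset.univ (quant m M hm x) (fun _ => p x y)]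
          simp
  -- first marginal below the cut
  have hfst_lt : ∀ z : Fin m, z.1 < k → fstM q z = fstM p z := by
    intro z hz
    unfold fstM
    exact Finset.sum_congr rfl fun y _ => hq_lt z hz y
  -- first marginal at the cut
  have hfst_k : ∀ z : Fin m, z.1 = k → fstM q z = w := by
    intro z hz
    unfold fstM
    rw [hwdef]
    calc (∑ y, q z y)
        = ∑ y, ∑ x : Fin m, if k ≤ x.1 then p x y else 0 :=
          Finset.sum_congr rfl fun y _ => hq_k z hz y
      _ = ∑ x : Fin m, ∑ y, if k ≤ x.1 then p x y else 0 := Finset.sum_comm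
      _ = ∑ x : Fin m, if k ≤ x.1 then fstM p x else 0 := by
          apply Finset.sum_congr rfl
          intro x _
          by_cases h : k ≤ x.1 <;> simp [h, fstM]
  -- nonnegativity of q
  have hqnn : ∀ z y, 0 ≤ q z y := by
    intro z y
    rw [hqdef]
    apply Finset.sum_nonneg
    intro x _
    by_cases h : quant m M hm x = z <;> simp [h, hpnn x y]
  -- q at the cut is dominated by the marginal
  have hqle : ∀ z : Fin m, z.1 = k → ∀ y, q z y ≤ sndM p y := by
    intro z hz y
    rw [hq_k z hz y]
    unfold sndM
    apply Finset.sum_le_sum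
    intro x _
    by_cases h : k ≤ x.1 <;> simp [h, hpnn x y]
  -- main estimate, termwise in z
  have key : mi q ≤ ∑ z : Fin m,
      ((if z.1 < k then contrib p z else 0) +
       (if z.1 = k then w * Real.log (1 / w) else 0)) := by
    show (∑ z, ∑ y, q z y * Real.log (q z y / (fstM q z * sndM q y))) ≤ _
    apply Finset.sum_le_sum
    intro z _
    rcases lt_trichotomy z.1 k with hz | hz | hz
    · have h2 : ¬ z.1 = k := by omega
      simp only [hz, if_true, h2, if_false, add_zero]
      apply le_of_eq
      unfold contrib
      apply Finset.sum_congr rfl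
      intro y _
      rw [hq_lt z hz y, hfst_lt z hz, hS y]
    · have h2 : ¬ z.1 < k := by omega
      rw [if_neg h2, if_pos hz, zero_add]
      have hsum : ∑ y, q z y = w := hfst_k z hz
      calc (∑ y, q z y * Real.log (q z y / (fstM q z * sndM q y)))
          ≤ ∑ y, q z y * Real.log (1 / w) := by
            apply Finset.sum_le_sum
            intro y _
            rcases eq_or_lt_of_le (hqnn z y) with hQ | hQ
            · rw [← hQ]; simp
            · have hSy : 0 < sndM p y := lt_of_lt_of_le hQ (hqle z hz y)
              apply mul_le_mul_of_nonneg_left _ (le_of_lt hQ)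
              apply Real.log_le_log
              · rw [hfst_k z hz, hS y]; positivity
              · rw [hfst_k z hz, hS y]
                rw [div_le_div_iff₀ (by positivity) hw]
                have : q z y ≤ sndM p y := hqle z hz y
                nlinarith
        _ = w * Real.log (1 / w) := by rw [← Finset.sum_mul, hsum]
    · have h1 : ¬ z.1 < k := by omega
      have h2 : ¬ z.1 = k := by omega
      simp only [h1, h2, if_false, add_zero]
      apply le_of_eq
      apply Finset.sum_eq_zero
      intro y _
      rw [hq_gt z hz y]
      simp
  -- split the bounding sum
  rw [Finset.sum_add_distrib] at key
  have hsingle : (∑ z : Fin m, if z.1 = k then w * Real.log (1 / w) else 0)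
      = w * Real.log (1 / w) := by
    have heq : ∀ z : Fin m, (if z.1 = k then w * Real.log (1 / w) else 0)
        = if z = (⟨k, hkm⟩ : Fin m) then w * Real.log (1 / w) else 0 := by
      intro z
      congr 1
      simp [Fin.ext_iff]
    rw [Finset.sum_congr rfl (fun z _ => heq z),
      Finset.sum_ite_eq' Finset.univ (⟨k, hkm⟩ : Fin m)]
    simp
  rw [hsingle] at key
  have hsorted := sorted_partial_avg hkm (contrib p) hsort
  have hmip : mi p = ∑ z, contrib p z := rfl
  have hm0 : (0:ℝ) < (m:ℝ) := by exact_mod_cast hm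
  have hMk : ((M : ℝ) - 1) = (k : ℝ) := by
    rw [hkdef]
    push_cast [hM]
    ring
  have hfin : (∑ z : Fin m, if z.1 < k then contrib p z else 0)
      ≤ ((M : ℝ) - 1) / m * mi p := by
    rw [hMk, hmip, div_mul_eq_mul_div, le_div_iff₀ hm0]
    linarith [hsorted]
  linarith

end BN
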